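/- Let G be a connected simple graph on at least two vertices and let 0 ≤ β < α ≤ 1 be real numbers. Then λ_min(A_β(G)) < λ_min(A_α(G)); that is, the smallest eigenvalue of A_α(G) is strictly increasing in α for connected graphs. -/

import Mathlib

open Matrix SimpleGraph

/-- Adjacency matrix of `G` over `ℝ`. -/
noncomputable def adjM {V : Type*} [Fintype V] (G : SimpleGraph V) : Matrix V V ℝ := by
  classical exact G.adjMatrix ℝ

/-- Diagonal matrix of vertex degrees of `G`, over `ℝ`. -/
noncomputable def degM {V : Type*} [Fintype V] (G : SimpleGraph V) : Matrix V V ℝ := by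
  classical exact Matrix.diagonal fun v => (G.degree v : ℝ)

/-- `A_α(G) = α·D(G) + (1-α)·A(G)`. -/
noncomputable def Amix {V : Type*} [Fintype V] (G : SimpleGraph V) (α : ℝ) : Matrix V V ℝ :=
  α • degM G + (1 - α) • adjM G

/-- Smallest eigenvalue of a real symmetric matrix (junk value `0` otherwise). -/
noncomputable def lambdaMin {n : Type*} [Fintype n] (M : Matrix n n ℝ) : ℝ := by
  classical exact if h : M.IsHermitian then ⨅ i, h.eigenvalues i else 0

/-- Largest eigenvalue of a real symmetric matrix (junk value `0` otherwise). -/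
noncomputable def lambdaMax {n : Type*} [Fintype n] (M : Matrix n n ℝ) : ℝ := by
  classical exact if h : M.IsHermitian then ⨆ i, h.eigenvalues i else 0

/-- `α₀(G)`: the smallest `α ∈ [0,1]` such that `A_α(G)` is positive semidefinite. -/
noncomputable def alpha0 {V : Type*} [Fintype V] (G : SimpleGraph V) : ℝ :=
  sInf {α : ℝ | α ∈ Set.Icc (0:ℝ) 1 ∧ (Amix G α).PosSemidef}

lemma adjM_eq {V : Type*} [Fintype V] (G : SimpleGraph V) [DecidableRel G.Adj] :
    adjM G = G.adjMatrix ℝ := by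
  unfold adjM; ext i j; simp [SimpleGraph.adjMatrix_apply]

lemma degM_eq {V : Type*} [Fintype V] [DecidableEq V] (G : SimpleGraph V) [DecidableRel G.Adj] :
    degM G = G.degMatrix ℝ := by
  unfold degM degMatrix
  ext i j
  simp only [Matrix.diagonal, Matrix.of_apply]
  congr!

lemma Amix_eq {V : Type*} [Fintype V] [DecidableEq V] (G : SimpleGraph V) [DecidableRel G.Adj]
    (γ : ℝ) : Amix G γ = γ • G.degMatrix ℝ + (1 - γ) • G.adjMatrix ℝ := by
  rw [Amix, adjM_eq, degM_eq]

lemma Amix_herm {V : Type*} [Fintype V] (G : SimpleGraph V) (γ : ℝ) :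
    (Amix G γ).IsHermitian := by
  classical
  rw [Amix_eq, IsHermitian, conjTranspose_eq_transpose_of_trivial]
  show Matrix.IsSymm _
  exact ((G.isSymm_degMatrix (R := ℝ)).smul γ).add ((G.isSymm_adjMatrix).smul (1-γ))

lemma Amix_sub {V : Type*} [Fintype V] [DecidableEq V] (G : SimpleGraph V) [DecidableRel G.Adj]
    (α β : ℝ) : Amix G β = Amix G α - (α - β) • G.lapMatrix ℝ := by
  rw [Amix_eq, Amix_eq, lapMatrix, smul_sub]
  ext i j
  simp [Matrix.add_apply, Matrix.sub_apply, Matrix.smul_apply]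
  split_ifs <;> ring

lemma rayleigh {n : Type*} [Fintype n] [DecidableEq n] {M : Matrix n n ℝ}
    (hM : M.IsHermitian) (c : ℝ) (hc : ∀ i, c ≤ hM.eigenvalues i) (x : n → ℝ) :
    c * (x ⬝ᵥ x) ≤ x ⬝ᵥ (M *ᵥ x) := by
  set U := (hM.eigenvectorUnitary : Matrix n n ℝ) with hU
  set y := star U *ᵥ x with hy
  have hsU : star U = Uᵀ := by
    rw [show star U = Uᴴ from rfl, conjTranspose_eq_transpose_of_trivial]
  have h1 : (star U)ᵀ = U := by rw [hsU, transpose_transpose]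
  have hyx : y ⬝ᵥ y = x ⬝ᵥ x := by
    rw [hy, dotProduct_mulVec, ← mulVec_transpose, h1, mulVec_mulVec,
      (mem_unitaryGroup_iff).mp (hM.eigenvectorUnitary).prop, one_mulVec]
  have hMx : x ⬝ᵥ (M *ᵥ x) = ∑ i, hM.eigenvalues i * (y i)^2 := by
    conv_lhs => rw [hM.spectral_theorem, Unitary.conjStarAlgAut_apply]
    rw [RCLike.ofReal_real_eq_id, ← mulVec_mulVec, ← mulVec_mulVec,
      dotProduct_mulVec, ← mulVec_transpose, ← hsU, ← hy]
    simp only [dotProduct, mulVec_diagonal, Function.comp_apply, id_eq]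
    exact Finset.sum_congr rfl fun i _ => by ring
  rw [hMx, ← hyx]
  have h2 : c * (y ⬝ᵥ y) = ∑ i, c * (y i)^2 := by
    simp only [dotProduct, Finset.mul_sum]
    exact Finset.sum_congr rfl fun i _ => by ring
  rw [h2]
  exact Finset.sum_le_sum fun i _ => mul_le_mul_of_nonneg_right (hc i) (sq_nonneg _)

lemma sum_eig {n : Type*} [Fintype n] [DecidableEq n] {M : Matrix n n ℝ}
    (hM : M.IsHermitian) : ∑ i, hM.eigenvalues i = M.trace := by
  conv_rhs => rw [hM.spectral_theorem, Unitary.conjStarAlgAut_apply]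
  rw [trace_mul_cycle, (mem_unitaryGroup_iff').mp (hM.eigenvectorUnitary).prop, one_mul,
    RCLike.ofReal_real_eq_id, trace_diagonal]
  simp

/-- If G is connected with at least two vertices and 0 ≤ β < α ≤ 1,
then λ_min(A_β(G)) < λ_min(A_α(G)). -/
theorem stmt_2 {V : Type*} [Fintype V] (G : SimpleGraph V)
    (hconn : G.Connected) (hcard : 2 ≤ Fintype.card V)
    (α β : ℝ) (hβ : 0 ≤ β) (hβα : β < α) (hα : α ≤ 1) :
    lambdaMin (Amix G β) < lambdaMin (Amix G α) := by
  classical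
  have hne : Nonempty V := Fintype.card_pos_iff.mp (by omega)
  have hA := Amix_herm G α
  have hB := Amix_herm G β
  have hlmα : lambdaMin (Amix G α) = ⨅ i, hA.eigenvalues i := by
    unfold lambdaMin; rw [dif_pos hA]
  have hlmβ : lambdaMin (Amix G β) = ⨅ i, hB.eigenvalues i := by
    unfold lambdaMin; rw [dif_pos hB]
  obtain ⟨i0, hi0⟩ := Finite.exists_min hA.eigenvalues
  have hμa : lambdaMin (Amix G α) = hA.eigenvalues i0 := by
    rw [hlmα]
    exact le_antisymm (ciInf_le (Finite.bddBelow_range _) i0) (le_ciInf hi0)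
  have hμb_le : ∀ i, lambdaMin (Amix G β) ≤ hB.eigenvalues i := fun i => by
    rw [hlmβ]; exact ciInf_le (Finite.bddBelow_range _) i
  set x : V → ℝ := ⇑(hA.eigenvectorBasis i0) with hxdef
  have hx0 : x ≠ 0 := by
    intro h
    apply hA.eigenvectorBasis.orthonormal.ne_zero i0
    ext j
    exact congrFun h j
  have heig : Amix G α *ᵥ x = lambdaMin (Amix G α) • x := by
    rw [hμa]; exact hA.mulVec_eigenvectorBasis i0
  have hs : 0 < x ⬝ᵥ x := by
    rcases lt_or_eq_of_le (Finset.sum_nonneg fun i _ => mul_self_nonneg (x i)) with h | h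
    · exact h
    · exact absurd ((dotProduct_self_eq_zero (v := x)).mp h.symm) hx0
  have hq0 : 0 ≤ x ⬝ᵥ (G.lapMatrix ℝ *ᵥ x) := by
    simpa using (posSemidef_lapMatrix ℝ G).dotProduct_mulVec_nonneg x
  have hray := rayleigh hB (lambdaMin (Amix G β)) hμb_le x
  have hMβx : x ⬝ᵥ (Amix G β *ᵥ x) =
      lambdaMin (Amix G α) * (x ⬝ᵥ x) - (α - β) * (x ⬝ᵥ (G.lapMatrix ℝ *ᵥ x)) := by
    rw [Amix_sub G α β, sub_mulVec, dotProduct_sub, heig, dotProduct_smul, smul_eq_mul,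
      smul_mulVec, dotProduct_smul, smul_eq_mul]
  rcases lt_or_eq_of_le hq0 with hq | hq
  · have hlt : lambdaMin (Amix G β) * (x ⬝ᵥ x) < lambdaMin (Amix G α) * (x ⬝ᵥ x) := by
      nlinarith [hray, hMβx, hq, sub_pos.mpr hβα]
    exact lt_of_mul_lt_mul_right hlt hs.le
  · have hconst : ∀ u v : V, x u = x v := by
      have h2 := (G.lapMatrix_toLinearMap₂'_apply'_eq_zero_iff_forall_reachable x).mp
        (by rw [Matrix.toLinearMap₂'_apply']; exact hq.symm)
      exact fun u v => h2 u v (hconn.preconnected u v)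
    obtain ⟨v0⟩ := hne
    have hc0 : x v0 ≠ 0 := by
      intro h
      apply hx0
      funext u
      rw [show x u = x v0 from hconst u v0, h]; rfl
    have hdeg : ∀ v : V, (G.degree v : ℝ) = lambdaMin (Amix G α) := by
      intro v
      have hsum : ∑ u ∈ G.neighborFinset v, x u = (G.degree v : ℝ) * x v := by
        rw [Finset.sum_congr rfl (fun u _ => hconst u v), Finset.sum_const, nsmul_eq_mul]
        rfl
      have hLv : (Amix G α *ᵥ x) v = (G.degree v : ℝ) * x v := by
        rw [Amix_eq, add_mulVec, smul_mulVec, smul_mulVec]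
        simp only [Pi.add_apply, Pi.smul_apply, smul_eq_mul, degMatrix_mulVec_apply,
          adjMatrix_mulVec_apply]
        rw [hsum]; ring
      have hv := congrFun heig v
      rw [hLv] at hv
      simp only [Pi.smul_apply, smul_eq_mul] at hv
      have hxvne : x v ≠ 0 := by rw [hconst v v0]; exact hc0
      exact mul_right_cancel₀ hxvne hv
    obtain ⟨w, hwv⟩ := Fintype.exists_ne_of_one_lt_card (by omega) v0
    have hdpos : 0 < G.degree v0 := by
      rw [G.degree_pos_iff_exists_adj]
      obtain ⟨p⟩ := hconn.preconnected v0 w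
      cases p with
      | nil => exact (hwv rfl).elim
      | cons h q => exact ⟨_, h⟩
    have hμa1 : (1 : ℝ) ≤ lambdaMin (Amix G α) := by
      rw [← hdeg v0]; exact_mod_cast hdpos
    have htr : (Amix G β).trace = β * ((Fintype.card V : ℝ) * lambdaMin (Amix G α)) := by
      rw [Amix_eq, trace_add, trace_smul, trace_smul, trace_adjMatrix, smul_zero, add_zero,
        degMatrix, trace_diagonal]
      rw [Finset.sum_congr rfl fun v _ => hdeg v, Finset.sum_const, nsmul_eq_mul, smul_eq_mul]
      simp
    have hnb : (Fintype.card V : ℝ) * lambdaMin (Amix G β) ≤ (Amix G β).trace := by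
      rw [← sum_eig hB]
      have := Finset.card_nsmul_le_sum Finset.univ hB.eigenvalues (lambdaMin (Amix G β))
        (fun i _ => hμb_le i)
      rw [nsmul_eq_mul] at this
      simpa using this
    have hn : (2 : ℝ) ≤ (Fintype.card V : ℝ) := by exact_mod_cast hcard
    by_contra hcon
    push_neg at hcon
    have hβ1 : β < 1 := lt_of_lt_of_le hβα hα
    have h1 : (Fintype.card V : ℝ) * lambdaMin (Amix G α) ≤
        (Fintype.card V : ℝ) * lambdaMin (Amix G β) :=
      mul_le_mul_of_nonneg_left hcon (by linarith)
    have h2 : (Fintype.card V : ℝ) * lambdaMin (Amix G β) ≤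
        β * ((Fintype.card V : ℝ) * lambdaMin (Amix G α)) := htr ▸ hnb
    have h3 : (2 : ℝ) ≤ (Fintype.card V : ℝ) * lambdaMin (Amix G α) := by nlinarith
    have h4 : (0 : ℝ) < (1 - β) * ((Fintype.card V : ℝ) * lambdaMin (Amix G α)) :=
      mul_pos (by linarith) (by linarith)
    nlinarith
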